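/- Let n ≥ 1, let r > 0, and let ℓ be a non-negative integer. Then there exists a real-valued function φ ∈ 𝒮(ℝⁿ) such that supp φ ⊂ {x ∈ ℝⁿ : |x| ≤ r}, ∫_{ℝⁿ} φ(x)² dx ≠ 0, and ∫_{ℝⁿ} x^β φ(x) dx = 0 for every multi-index β with |β| ≤ ℓ. -/

import Mathlib

open MeasureTheory Filter Set Function
open scoped BigOperators ContDiff

section OneDim

variable {h g : ℝ → ℝ}

lemma my_ibp (hsm : ContDiff ℝ ∞ h) (hcs : HasCompactSupport h) (k : ℕ) :
    ∫ t : ℝ, t ^ k * deriv h t = - ∫ t : ℝ, ((k : ℝ) * t ^ (k - 1)) * h t := by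
  have hu : ∀ x : ℝ, HasDerivAt (fun t : ℝ => t ^ k) ((k : ℝ) * x ^ (k - 1)) x :=
    fun x => hasDerivAt_pow k x
  have hv : ∀ x : ℝ, HasDerivAt h (deriv h x) x := fun x =>
    ((hsm.differentiable (by norm_num)) x).hasDerivAt
  have hdc : Continuous (deriv h) := hsm.continuous_deriv (by norm_num)
  have hdcs : HasCompactSupport (deriv h) := hcs.deriv
  have h1 : Integrable ((fun t : ℝ => t ^ k) * deriv h) :=
    ((continuous_pow k).mul hdc).integrable_of_hasCompactSupport hdcs.mul_left
  have h2 : Integrable ((fun t : ℝ => (k : ℝ) * t ^ (k - 1)) * h) :=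
    ((continuous_const.mul (continuous_pow (k - 1))).mul hsm.continuous).integrable_of_hasCompactSupport
      hcs.mul_left
  have h3 : Integrable ((fun t : ℝ => t ^ k) * h) :=
    ((continuous_pow k).mul hsm.continuous).integrable_of_hasCompactSupport hcs.mul_left
  simpa using integral_mul_deriv_eq_deriv_mul_of_integrable (fun x _ => hu x) (fun x _ => hv x) h1 h2 h3

lemma iter_smooth (hsm : ContDiff ℝ ∞ g) (m : ℕ) : ContDiff ℝ ∞ (iteratedDeriv m g) := by
  rw [iteratedDeriv_eq_iterate]; exact hsm.iterate_deriv m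

lemma iter_cs (hcs : HasCompactSupport g) (m : ℕ) :
    HasCompactSupport (iteratedDeriv m g) := by
  induction m with
  | zero => simpa using hcs
  | succ m ih => rw [iteratedDeriv_succ]; exact ih.deriv

lemma iter_tsupport (m : ℕ) : tsupport (iteratedDeriv m g) ⊆ tsupport g := by
  induction m with
  | zero => simp [iteratedDeriv_zero]
  | succ m ih =>
      rw [iteratedDeriv_succ]
      exact (closure_minimal support_deriv_subset (isClosed_tsupport _)).trans ih

lemma moment_vanish (hsm : ContDiff ℝ ∞ g) (hcs : HasCompactSupport g) :
    ∀ m k : ℕ, k < m → ∫ t : ℝ, t ^ k * iteratedDeriv m g t = 0 := by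
  intro m
  induction m with
  | zero => omega
  | succ m ih =>
      intro k hk
      rw [iteratedDeriv_succ, my_ibp (iter_smooth hsm m) (iter_cs hcs m) k]
      rcases k with _ | j
      · simp
      · have : ∫ t : ℝ, (((j + 1 : ℕ) : ℝ) * t ^ (j + 1 - 1)) * iteratedDeriv m g t
            = ((j + 1 : ℕ) : ℝ) * ∫ t : ℝ, t ^ j * iteratedDeriv m g t := by
          simp_rw [Nat.add_sub_cancel, mul_assoc]
          exact integral_const_mul _ _
        rw [this, ih j (by omega)]
        simp

lemma moment_top (hsm : ContDiff ℝ ∞ g) (hcs : HasCompactSupport g) :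
    ∀ m : ℕ, ∫ t : ℝ, t ^ m * iteratedDeriv m g t
      = (-1 : ℝ) ^ m * (m.factorial : ℝ) * ∫ t : ℝ, g t := by
  intro m
  induction m with
  | zero => simp [iteratedDeriv_zero]
  | succ m ih =>
      rw [iteratedDeriv_succ, my_ibp (iter_smooth hsm m) (iter_cs hcs m) (m + 1)]
      have : ∫ t : ℝ, (((m + 1 : ℕ) : ℝ) * t ^ (m + 1 - 1)) * iteratedDeriv m g t
          = ((m + 1 : ℕ) : ℝ) * ∫ t : ℝ, t ^ m * iteratedDeriv m g t := by
        simp_rw [Nat.add_sub_cancel, mul_assoc]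
        exact integral_const_mul _ _
      rw [this, ih, Nat.factorial_succ]
      push_cast
      ring

end OneDim

/-- A smooth compactly supported function is a Schwartz function. -/
noncomputable def mySchwartz {E : Type*} [NormedAddCommGroup E] [NormedSpace ℝ E]
    (f : E → ℝ) (h1 : ContDiff ℝ ∞ f) (h2 : HasCompactSupport f) :
    SchwartzMap E ℝ where
  toFun := f
  smooth' := h1
  decay' := by
    intro k m
    have hc : Continuous fun x => ‖x‖ ^ k * ‖iteratedFDeriv ℝ m f x‖ :=
      ((continuous_norm.pow k)).mul (h1.continuous_iteratedFDeriv (by exact_mod_cast le_top)).norm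
    have hcs : HasCompactSupport fun x => ‖x‖ ^ k * ‖iteratedFDeriv ℝ m f x‖ := by
      have : HasCompactSupport fun x => ‖iteratedFDeriv ℝ m f x‖ :=
        (h2.iteratedFDeriv m).norm
      exact this.mul_left
    obtain ⟨C, hC⟩ := hcs.exists_bound_of_continuous hc
    exact ⟨C, fun x => (Real.le_norm_self _).trans (hC x)⟩

/-- Let `n ≥ 1`, `r > 0` and `ℓ` a non-negative integer.  Then there is a
real-valued Schwartz function `φ` on `ℝⁿ` supported in the ball `{|x| ≤ r}`, with
`∫ φ² ≠ 0`, all of whose moments `∫ x^β φ(x) dx` of order `|β| ≤ ℓ` vanish. -/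
theorem stmt_4 (n : ℕ) (hn : 1 ≤ n) (r : ℝ) (hr : 0 < r) (ℓ : ℕ) :
    ∃ φ : SchwartzMap (EuclideanSpace ℝ (Fin n)) ℝ,
      tsupport ⇑φ ⊆ {x : EuclideanSpace ℝ (Fin n) | ‖x‖ ≤ r} ∧
      (∫ x, (φ x) ^ 2) ≠ 0 ∧
      ∀ β : Fin n → ℕ, (∑ i, β i) ≤ ℓ →
        (∫ x : EuclideanSpace ℝ (Fin n), (∏ i, x i ^ β i) * φ x) = 0 := by
  classical
  -- the one-dimensional building block
  set a : ℝ := r / n with ha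
  have hapos : 0 < a := div_pos hr (by exact_mod_cast hn)
  set b : ContDiffBump (0 : ℝ) := ⟨a / 2, a, by positivity, by linarith⟩ with hb
  set g : ℝ → ℝ := ⇑b with hg
  have hgsm : ContDiff ℝ ∞ g := b.contDiff
  have hgcs : HasCompactSupport g := b.hasCompactSupport
  set f : ℝ → ℝ := iteratedDeriv (ℓ + 1) g with hf
  have hfsm : ContDiff ℝ ∞ f := iter_smooth hgsm _
  have hfcs : HasCompactSupport f := iter_cs hgcs _
  have hfsupp : tsupport f ⊆ Metric.closedBall (0 : ℝ) a := by
    have := iter_tsupport (g := g) (ℓ + 1)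
    rwa [b.tsupport_eq] at this
  have hmom : ∀ k : ℕ, k ≤ ℓ → ∫ t : ℝ, t ^ k * f t = 0 := fun k hk =>
    moment_vanish hgsm hgcs (ℓ + 1) k (by omega)
  have htop : ∫ t : ℝ, t ^ (ℓ + 1) * f t ≠ 0 := by
    rw [moment_top hgsm hgcs (ℓ + 1)]
    exact mul_ne_zero (mul_ne_zero (pow_ne_zero _ (by norm_num))
      (by exact_mod_cast (Nat.factorial_pos (ℓ + 1)).ne')) b.integral_pos.ne'
  -- f is not identically zero, so ∫ f² > 0
  have hfne : ∃ t₀, f t₀ ≠ 0 := by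
    by_contra hcon
    push_neg at hcon
    exact htop (by simp [hcon])
  have hsq : (0 : ℝ) < ∫ t : ℝ, f t ^ 2 := by
    obtain ⟨t₀, ht₀⟩ := hfne
    have hint : Integrable fun t : ℝ => f t ^ 2 := by
      have : HasCompactSupport fun t => f t ^ 2 :=
        hfcs.comp_left (g := fun s : ℝ => s ^ 2) (by simp)
      exact (hfsm.continuous.pow 2).integrable_of_hasCompactSupport this
    refine (integral_pos_iff_support_of_nonneg (fun t => sq_nonneg _) hint).2 ?_
    have hopen : IsOpen (support fun t : ℝ => f t ^ 2) :=
      isOpen_compl_singleton.preimage (hfsm.continuous.pow 2)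
    refine hopen.measure_pos _ ⟨t₀, ?_⟩
    simp [support, ht₀]
  -- the n-dimensional function
  set φf : EuclideanSpace ℝ (Fin n) → ℝ := fun x => ∏ i, f (x i) with hφf
  have hφsm : ContDiff ℝ ∞ φf := by
    apply contDiff_prod
    intro i _
    exact hfsm.comp (EuclideanSpace.proj (𝕜 := ℝ) i).contDiff
  have hsup : support φf ⊆ Metric.closedBall (0 : EuclideanSpace ℝ (Fin n)) r := by
    intro x hx
    have hxi : ∀ i, |x i| ≤ a := by
      intro i
      have : f (x i) ≠ 0 := by
        intro hzero
        apply hx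
        exact Finset.prod_eq_zero (Finset.mem_univ i) hzero
      have hmem : x i ∈ tsupport f := subset_closure this
      have := hfsupp hmem
      simpa [Real.dist_eq] using this
    have hnorm : ‖x‖ ≤ r := by
      rw [EuclideanSpace.norm_eq]
      have hsum : ∑ i, ‖x i‖ ^ 2 ≤ ∑ _i : Fin n, a ^ 2 := by
        apply Finset.sum_le_sum
        intro i _
        have := hxi i
        rw [Real.norm_eq_abs]
        nlinarith [abs_nonneg (x i)]
      have : (Real.sqrt (∑ i, ‖x i‖ ^ 2)) ≤ Real.sqrt (n * a ^ 2) := by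
        apply Real.sqrt_le_sqrt
        simpa using hsum
      refine this.trans ?_
      rw [show (n : ℝ) * a ^ 2 = (r ^ 2) / n by rw [ha]; field_simp]
      calc Real.sqrt (r ^ 2 / n) ≤ Real.sqrt (r ^ 2) := by
            apply Real.sqrt_le_sqrt
            rw [div_le_iff₀ (by exact_mod_cast hn : (0:ℝ) < n)]
            nlinarith [ (by exact_mod_cast hn : (1:ℝ) ≤ n) ]
        _ = r := Real.sqrt_sq hr.le
    simpa [Metric.mem_closedBall, dist_zero_right] using hnorm
  have htsup : tsupport φf ⊆ Metric.closedBall (0 : EuclideanSpace ℝ (Fin n)) r :=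
    closure_minimal hsup Metric.isClosed_closedBall
  have hφcs : HasCompactSupport φf :=
    HasCompactSupport.of_support_subset_isCompact (isCompact_closedBall _ _) hsup
  refine ⟨mySchwartz φf hφsm hφcs, ?_, ?_, ?_⟩
  · intro x hx
    have : x ∈ Metric.closedBall (0 : EuclideanSpace ℝ (Fin n)) r := htsup hx
    simpa [Metric.mem_closedBall, dist_zero_right] using this
  · -- ∫ φ² = (∫ f²)^n ≠ 0
    have key : (∫ x : EuclideanSpace ℝ (Fin n), φf x ^ 2)
        = (∫ t : ℝ, f t ^ 2) ^ n := by
      have hmp := (EuclideanSpace.volume_preserving_symm_measurableEquiv_toLp (Fin n)).symm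
      rw [← hmp.integral_comp (MeasurableEquiv.measurableEmbedding _)]
      have : ∀ y : Fin n → ℝ,
          φf ((MeasurableEquiv.toLp 2 (Fin n → ℝ)).symm.symm y) ^ 2
            = ∏ i, f (y i) ^ 2 := by
        intro y
        simp only [hφf, MeasurableEquiv.symm_symm, MeasurableEquiv.coe_toLp, PiLp.toLp_apply]
        rw [← Finset.prod_pow]
      simp_rw [this]
      rw [MeasureTheory.integral_fintype_prod_volume_eq_prod (ι := Fin n) (fun _ (t : ℝ) => f t ^ 2)]
      simp
    rw [show (∫ x, ((mySchwartz φf hφsm hφcs) x) ^ 2) = ∫ x, φf x ^ 2 from rfl, key]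
    exact pow_ne_zero _ hsq.ne'
  · intro β hβ
    have key : (∫ x : EuclideanSpace ℝ (Fin n), (∏ i, x i ^ β i) * φf x)
        = ∏ i, ∫ t : ℝ, t ^ β i * f t := by
      have hmp := (EuclideanSpace.volume_preserving_symm_measurableEquiv_toLp (Fin n)).symm
      rw [← hmp.integral_comp (MeasurableEquiv.measurableEmbedding _)]
      have : ∀ y : Fin n → ℝ,
          (∏ i, ((MeasurableEquiv.toLp 2 (Fin n → ℝ)).symm.symm y) i ^ β i)
            * φf ((MeasurableEquiv.toLp 2 (Fin n → ℝ)).symm.symm y)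
            = ∏ i, (y i ^ β i * f (y i)) := by
        intro y
        simp only [hφf, MeasurableEquiv.symm_symm, MeasurableEquiv.coe_toLp, PiLp.toLp_apply]
        rw [← Finset.prod_mul_distrib]
      simp_rw [this]
      rw [MeasureTheory.integral_fintype_prod_volume_eq_prod (ι := Fin n) (fun i (t : ℝ) => t ^ β i * f t)]
    rw [show (∫ x : EuclideanSpace ℝ (Fin n), (∏ i, x i ^ β i) * (mySchwartz φf hφsm hφcs) x)
        = ∫ x : EuclideanSpace ℝ (Fin n), (∏ i, x i ^ β i) * φf x from rfl, key]
    have i0 : Fin n := ⟨0, by omega⟩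
    apply Finset.prod_eq_zero (Finset.mem_univ i0)
    apply hmom
    calc β i0 ≤ ∑ i, β i := Finset.single_le_sum (fun _ _ => Nat.zero_le _) (Finset.mem_univ i0)
      _ ≤ ℓ := hβ
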